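/- For all real numbers α > 0 and d ∈ (0,1), ∫₀^∞ x^(−1−d) (1 − (1+x)^(−α)) dx = (α/d) · Γ(1−d)·Γ(α+d)/Γ(α+1). Consequently, the expected number of rejections in the rejection representation of the beta prime process BPP(γ, α, d) with proposal rate measure γ·(Γ(α+1)/(Γ(1−d)Γ(α+d)))·x^(−1−d) dx equals γα/d. -/

import Mathlib

open Real MeasureTheory

open Set Filter

lemma bppRealBeta (a b : ℝ) (ha : 0 < a) (hb : 0 < b) :
    ∫ x in Set.Ioo (0:ℝ) 1, x ^ (a-1) * (1-x) ^ (b-1)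
      = Real.Gamma a * Real.Gamma b / Real.Gamma (a+b) := by
  have hab : Real.Gamma (a+b) ≠ 0 := (Real.Gamma_pos_of_pos (by linarith)).ne'
  have key := Complex.Gamma_mul_Gamma_eq_betaIntegral (s := (a:ℂ)) (t := (b:ℂ))
    (by simpa using ha) (by simpa using hb)
  have hIoo : (∫ x in Set.Ioo (0:ℝ) 1, x ^ (a-1) * (1-x) ^ (b-1))
      = ∫ x in (0:ℝ)..1, x ^ (a-1) * (1-x) ^ (b-1) := by
    rw [intervalIntegral.integral_of_le zero_le_one,
      MeasureTheory.integral_Ioc_eq_integral_Ioo]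
  have hbeta : Complex.betaIntegral a b
      = ((∫ x in Set.Ioo (0:ℝ) 1, x ^ (a-1) * (1-x) ^ (b-1) : ℝ) : ℂ) := by
    rw [hIoo, Complex.betaIntegral, ← intervalIntegral.integral_ofReal]
    apply intervalIntegral.integral_congr
    intro x hx
    rw [Set.uIcc_of_le (by norm_num : (0:ℝ) ≤ 1)] at hx
    obtain ⟨hx0, hx1⟩ := hx
    push_cast
    rw [Complex.ofReal_cpow hx0, Complex.ofReal_cpow (by linarith)]
    push_cast
    ring
  rw [hbeta, show ((a:ℂ) + (b:ℂ)) = ((a+b:ℝ):ℂ) from by push_cast; rfl,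
    Complex.Gamma_ofReal, Complex.Gamma_ofReal, Complex.Gamma_ofReal,
    ← Complex.ofReal_mul, ← Complex.ofReal_mul] at key
  have h2 := Complex.ofReal_injective key
  rw [eq_div_iff hab]
  linarith

lemma bppCov (α d : ℝ) :
    ∫ x in Set.Ioi (0:ℝ), x ^ (-d) * (1+x) ^ (-α-1)
      = ∫ u in Set.Ioo (0:ℝ) 1, u ^ (-d) * (1-u) ^ (α+d-1) := by
  have himg : Set.Ioi (0:ℝ) = (fun u => u / (1-u)) '' Set.Ioo 0 1 := by
    ext x
    simp only [Set.mem_image, Set.mem_Ioi, Set.mem_Ioo]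
    constructor
    · intro hx
      refine ⟨x / (1+x), ⟨by positivity, ?_⟩, ?_⟩
      · rw [div_lt_one (by linarith)]; linarith
      · field_simp; ring
    · rintro ⟨u, ⟨hu0, hu1⟩, rfl⟩
      exact div_pos hu0 (by linarith)
  have hderiv : ∀ u ∈ Set.Ioo (0:ℝ) 1,
      HasDerivWithinAt (fun u => u / (1-u)) (((1-u)^2)⁻¹) (Set.Ioo 0 1) u := by
    intro u hu
    have h1u : (1:ℝ) - u ≠ 0 := by rw [Set.mem_Ioo] at hu; intro h; linarith [hu.2]
    have := (hasDerivAt_id u).div ((hasDerivAt_id u).const_sub 1) h1u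
    refine this.hasDerivWithinAt.congr_deriv ?_
    simp only [id]
    field_simp
    ring
  have hinj : Set.InjOn (fun u : ℝ => u / (1-u)) (Set.Ioo 0 1) := by
    intro u hu v hv h
    rw [Set.mem_Ioo] at hu hv
    have h1u : (1:ℝ) - u ≠ 0 := by intro h; linarith [hu.2]
    have h1v : (1:ℝ) - v ≠ 0 := by intro h; linarith [hv.2]
    field_simp at h
    linarith
  rw [himg, MeasureTheory.integral_image_eq_integral_abs_deriv_smul measurableSet_Ioo
    hderiv hinj (fun x => x ^ (-d) * (1+x) ^ (-α-1))]
  apply MeasureTheory.setIntegral_congr_fun measurableSet_Ioo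
  intro u hu
  rw [Set.mem_Ioo] at hu
  obtain ⟨hu0, hu1⟩ := hu
  have h1u : (0:ℝ) < 1 - u := by linarith
  have h1 : (1:ℝ) + u / (1-u) = (1-u)⁻¹ := by field_simp; ring
  have h2 : (u / (1-u)) ^ (-d) = u ^ (-d) * (1-u) ^ d := by
    rw [Real.div_rpow hu0.le h1u.le, Real.rpow_neg h1u.le, div_eq_mul_inv, inv_inv]
  have h3 : ((1-u)⁻¹) ^ (-α-1) = (1-u) ^ (α+1) := by
    rw [← Real.rpow_neg_one (1-u), ← Real.rpow_mul h1u.le]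
    norm_num
    ring_nf
  simp only [smul_eq_mul, h1, h2, h3, abs_of_pos (inv_pos.mpr (pow_pos h1u 2))]
  rw [← Real.rpow_natCast (1-u) 2, ← Real.rpow_neg h1u.le]
  rw [show u ^ (-d) * (1-u) ^ d * ((1-u) ^ (α+1)) = u ^ (-d) * ((1-u) ^ d * (1-u) ^ (α+1)) from by ring,
    ← Real.rpow_add h1u]
  rw [mul_comm ((1-u) ^ (-(2:ℕ):ℝ)) _, mul_assoc, ← Real.rpow_add h1u]
  norm_num
  left
  congr 1
  ring

lemma bppBern (α x : ℝ) (hα : 0 ≤ α) (hx : 0 ≤ x) : 1 - (1+x) ^ (-α) ≤ α * x := by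
  have h1x : (0:ℝ) < 1 + x := by linarith
  have h1 : (1+x) ^ (-α) = Real.exp (Real.log (1+x) * (-α)) := by
    rw [Real.rpow_def_of_pos h1x]
  have h2 : 1 + Real.log (1+x) * (-α) ≤ Real.exp (Real.log (1+x) * (-α)) :=
    Real.add_one_le_exp _ |>.trans_eq rfl |> fun h => by linarith [Real.add_one_le_exp (Real.log (1+x) * (-α))]
  have h3 : Real.log (1+x) ≤ x := by
    have := Real.log_le_sub_one_of_pos h1x
    linarith
  have h4 : α * Real.log (1+x) ≤ α * x := mul_le_mul_of_nonneg_left h3 hα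
  have h5 : Real.log (1+x) * (-α) = -(α * Real.log (1+x)) := by ring
  rw [h1]
  nlinarith [Real.add_one_le_exp (Real.log (1+x) * (-α))]

lemma bppNonneg1 (α x : ℝ) (hα : 0 ≤ α) (hx : 0 ≤ x) : (1+x) ^ (-α) ≤ 1 :=
  Real.rpow_le_one_of_one_le_of_nonpos (by linarith) (by linarith)

lemma bppNonneg2 (α x : ℝ) (hx : 0 ≤ x) : 0 ≤ (1+x) ^ (-α) :=
  Real.rpow_nonneg (by linarith) _

lemma bppContOn1 (α d : ℝ) : ContinuousOn (fun x : ℝ => x ^ (-1-d) * (1 - (1+x) ^ (-α))) (Set.Ioi 0) := by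
  apply ContinuousOn.mul
  · exact ContinuousOn.rpow_const continuousOn_id (fun x hx => Or.inl (ne_of_gt hx))
  · apply continuousOn_const.sub
    exact ContinuousOn.rpow_const (continuousOn_const.add continuousOn_id)
      (fun x hx => Or.inl (by simp only [Set.mem_Ioi] at hx; intro h; linarith))

lemma bppContOn2 (α d : ℝ) : ContinuousOn (fun x : ℝ => x ^ (-d) * (1+x) ^ (-α-1)) (Set.Ioi 0) := by
  apply ContinuousOn.mul
  · exact ContinuousOn.rpow_const continuousOn_id (fun x hx => Or.inl (ne_of_gt hx))
  · exact ContinuousOn.rpow_const (continuousOn_const.add continuousOn_id)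
      (fun x hx => Or.inl (by simp only [Set.mem_Ioi] at hx; intro h; linarith))

lemma bppInt2 (α d : ℝ) (hα : 0 < α) (hd0 : 0 < d) (hd1 : d < 1) :
    IntegrableOn (fun x : ℝ => x ^ (-d) * (1+x) ^ (-α-1)) (Set.Ioi 0) := by
  rw [← Set.Ioc_union_Ioi_eq_Ioi (zero_le_one (α := ℝ))]
  apply IntegrableOn.union
  · -- on Ioc 0 1, bound by x^(-d)
    have hint : IntegrableOn (fun x : ℝ => x ^ (-d)) (Set.Ioc (0:ℝ) 1) := by
      rw [← intervalIntegrable_iff_integrableOn_Ioc_of_le zero_le_one]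
      exact intervalIntegral.intervalIntegrable_rpow' (by linarith)
    apply Integrable.mono' hint
    · exact ((bppContOn2 α d).mono (Set.Ioc_subset_Ioi_self)).aestronglyMeasurable measurableSet_Ioc
    · filter_upwards [ae_restrict_mem measurableSet_Ioc] with x hx
      obtain ⟨hx0, hx1⟩ := hx
      rw [Real.norm_eq_abs, abs_of_nonneg (by positivity)]
      calc x ^ (-d) * (1+x) ^ (-α-1) ≤ x ^ (-d) * 1 := by
            apply mul_le_mul_of_nonneg_left _ (by positivity)
            exact Real.rpow_le_one_of_one_le_of_nonpos (by linarith) (by linarith)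
        _ = x ^ (-d) := mul_one _
  · -- on Ioi 1, bound by x^(-d + (-α-1))
    have hint : IntegrableOn (fun x : ℝ => x ^ (-d + (-α-1))) (Set.Ioi (1:ℝ)) :=
      integrableOn_Ioi_rpow_of_lt (by linarith) one_pos
    apply Integrable.mono' hint
    · exact ((bppContOn2 α d).mono (fun x (hx : x ∈ Set.Ioi (1:ℝ)) => Set.mem_Ioi.mpr (lt_trans one_pos hx))).aestronglyMeasurable
        measurableSet_Ioi
    · filter_upwards [ae_restrict_mem measurableSet_Ioi] with x hx
      have hx0 : (0:ℝ) < x := lt_trans one_pos hx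
      rw [Real.norm_eq_abs, abs_of_nonneg (by positivity), Real.rpow_add hx0]
      apply mul_le_mul_of_nonneg_left _ (by positivity)
      exact Real.rpow_le_rpow_of_nonpos hx0 (by linarith) (by linarith)

lemma bppInt1 (α d : ℝ) (hα : 0 < α) (hd0 : 0 < d) (hd1 : d < 1) :
    IntegrableOn (fun x : ℝ => x ^ (-1-d) * (1 - (1+x) ^ (-α))) (Set.Ioi 0) := by
  rw [← Set.Ioc_union_Ioi_eq_Ioi (zero_le_one (α := ℝ))]
  apply IntegrableOn.union
  · have hbase : IntegrableOn (fun x : ℝ => x ^ (-d)) (Set.Ioc (0:ℝ) 1) := by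
      rw [← intervalIntegrable_iff_integrableOn_Ioc_of_le zero_le_one]
      exact intervalIntegral.intervalIntegrable_rpow' (by linarith)
    have hint : IntegrableOn (fun x : ℝ => α * x ^ (-d)) (Set.Ioc (0:ℝ) 1) :=
      hbase.const_mul α
    apply Integrable.mono' hint
    · exact ((bppContOn1 α d).mono (Set.Ioc_subset_Ioi_self)).aestronglyMeasurable measurableSet_Ioc
    · filter_upwards [ae_restrict_mem measurableSet_Ioc] with x hx
      obtain ⟨hx0, hx1⟩ := hx
      have hb := bppBern α x hα.le hx0.le
      have hn := bppNonneg1 α x hα.le hx0.le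
      rw [Real.norm_eq_abs, abs_of_nonneg
        (mul_nonneg (Real.rpow_nonneg hx0.le _) (by linarith))]
      calc x ^ (-1-d) * (1 - (1+x) ^ (-α)) ≤ x ^ (-1-d) * (α * x) := by
            apply mul_le_mul_of_nonneg_left hb (by positivity)
        _ = α * (x ^ (-1-d) * x ^ (1:ℝ)) := by rw [Real.rpow_one]; ring
        _ = α * x ^ (-d) := by
            rw [← Real.rpow_add hx0, show -1 - d + (1:ℝ) = -d from by ring]
  · have hint : IntegrableOn (fun x : ℝ => x ^ (-1-d)) (Set.Ioi (1:ℝ)) :=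
      integrableOn_Ioi_rpow_of_lt (by linarith) one_pos
    apply Integrable.mono' hint
    · exact ((bppContOn1 α d).mono (fun x (hx : x ∈ Set.Ioi (1:ℝ)) => Set.mem_Ioi.mpr (lt_trans one_pos hx))).aestronglyMeasurable
        measurableSet_Ioi
    · filter_upwards [ae_restrict_mem measurableSet_Ioi] with x hx
      have hx0 : (0:ℝ) < x := lt_trans one_pos hx
      have hn := bppNonneg1 α x hα.le hx0.le
      have hn2 := bppNonneg2 α x hx0.le
      rw [Real.norm_eq_abs, abs_of_nonneg
        (mul_nonneg (Real.rpow_nonneg hx0.le _) (by linarith))]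
      calc x ^ (-1-d) * (1 - (1+x) ^ (-α)) ≤ x ^ (-1-d) * 1 :=
            mul_le_mul_of_nonneg_left (by linarith) (by positivity)
        _ = x ^ (-1-d) := mul_one _
lemma bppFTC (α d : ℝ) (hα : 0 < α) (hd0 : 0 < d) (hd1 : d < 1) :
    ∫ x in Set.Ioi (0:ℝ),
      (x ^ (-1-d) * (1 - (1+x) ^ (-α)) - (α/d) * (x ^ (-d) * (1+x) ^ (-α-1))) = 0 := by
  set f : ℝ → ℝ := fun x => -(1/d) * (x ^ (-d) * (1 - (1+x) ^ (-α))) with hf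
  have hf0 : f 0 = 0 := by simp [hf]
  have hgsq : Tendsto (fun x : ℝ => x ^ (-d) * (1 - (1+x) ^ (-α))) (nhdsWithin 0 (Set.Ici 0))
      (nhds 0) := by
    have hbound : Tendsto (fun x : ℝ => α * x ^ (1-d)) (nhdsWithin 0 (Set.Ici 0)) (nhds 0) := by
      have : ContinuousAt (fun x : ℝ => x ^ (1-d)) 0 :=
        Real.continuousAt_rpow_const 0 (1-d) (Or.inr (by linarith))
      have h0 : (0:ℝ) ^ (1-d) = 0 := Real.zero_rpow (by intro h; linarith [h]; )
      have h2' : Tendsto (fun x : ℝ => x ^ (1-d)) (nhdsWithin 0 (Set.Ici 0))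
          (nhds ((0:ℝ) ^ (1-d))) := this.tendsto.mono_left nhdsWithin_le_nhds
      have := h2'.const_mul α
      rw [h0, mul_zero] at this
      exact this
    apply squeeze_zero' ?_ ?_ hbound
    · filter_upwards [self_mem_nhdsWithin] with x hx
      have hx0 : (0:ℝ) ≤ x := hx
      exact mul_nonneg (Real.rpow_nonneg hx0 _) (by linarith [bppNonneg1 α x hα.le hx0])
    · filter_upwards [self_mem_nhdsWithin] with x hx
      have hx0 : (0:ℝ) ≤ x := hx
      rcases eq_or_lt_of_le hx0 with h | h
      · simp [← h, Real.zero_rpow (by intro hh; linarith : -d ≠ 0)]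
        positivity
      · calc x ^ (-d) * (1 - (1+x) ^ (-α)) ≤ x ^ (-d) * (α * x) :=
              mul_le_mul_of_nonneg_left (bppBern α x hα.le hx0) (Real.rpow_nonneg hx0 _)
          _ = α * (x ^ (-d) * x ^ (1:ℝ)) := by rw [Real.rpow_one]; ring
          _ = α * x ^ (1-d) := by
              rw [← Real.rpow_add h, show -d + (1:ℝ) = 1 - d from by ring]
  have hcont : ContinuousWithinAt f (Set.Ici 0) 0 := by
    rw [ContinuousWithinAt, hf0]
    have := hgsq.const_mul (-(1/d))
    rw [mul_zero] at this
    exact this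
  have hderiv : ∀ x ∈ Set.Ioi (0:ℝ), HasDerivAt f
      (x ^ (-1-d) * (1 - (1+x) ^ (-α)) - (α/d) * (x ^ (-d) * (1+x) ^ (-α-1))) x := by
    intro x hx
    rw [Set.mem_Ioi] at hx
    have h1x : (0:ℝ) < 1 + x := by linarith
    have h1 : HasDerivAt (fun x : ℝ => x ^ (-d)) (-d * x ^ (-d-1)) x := by
      simpa using Real.hasDerivAt_rpow_const (x := x) (p := -d) (Or.inl hx.ne')
    have h2 : HasDerivAt (fun x : ℝ => (1+x) ^ (-α)) (-α * (1+x) ^ (-α-1)) x := by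
      have hb : HasDerivAt (fun x : ℝ => 1 + x) 1 x := by
        simpa using (hasDerivAt_id x).const_add 1
      have := hb.rpow_const (p := -α) (Or.inl h1x.ne')
      simpa using this
    have h3 : HasDerivAt (fun x : ℝ => 1 - (1+x) ^ (-α)) (α * (1+x) ^ (-α-1)) x := by
      have := h2.const_sub 1
      simpa using this
    have h4 := (h1.mul h3).const_mul (-(1/d))
    refine h4.congr_deriv ?_
    rw [show (-d-1:ℝ) = -1-d from by ring] at *
    have hd' : d ≠ 0 := hd0.ne'
    field_simp
    ring
  have htop : Tendsto f atTop (nhds 0) := by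
    have ha : Tendsto (fun x : ℝ => x ^ (-d)) atTop (nhds 0) := tendsto_rpow_neg_atTop hd0
    have hb : Tendsto (fun x : ℝ => (1+x) ^ (-α)) atTop (nhds 0) :=
      (tendsto_rpow_neg_atTop hα).comp (tendsto_atTop_add_const_left atTop 1 tendsto_id)
    have hc : Tendsto (fun x : ℝ => 1 - (1+x) ^ (-α)) atTop (nhds 1) := by
      have := (tendsto_const_nhds (x := (1:ℝ)) (f := atTop)).sub hb
      simpa using this
    have := (ha.mul hc).const_mul (-(1/d))
    simpa [hf, one_div] using this
  have hfint : IntegrableOn (fun x : ℝ =>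
      x ^ (-1-d) * (1 - (1+x) ^ (-α)) - (α/d) * (x ^ (-d) * (1+x) ^ (-α-1))) (Set.Ioi 0) :=
    (bppInt1 α d hα hd0 hd1).sub ((bppInt2 α d hα hd0 hd1).const_mul (α/d))
  have := MeasureTheory.integral_Ioi_of_hasDerivAt_of_tendsto hcont hderiv hfint htop
  rw [this, hf0, sub_zero]

/-- For `α > 0` and `d ∈ (0,1)`,
`∫₀^∞ x^(-1-d) (1 - (1+x)^(-α)) dx = (α/d) Γ(1-d)Γ(α+d)/Γ(α+1)`.
Consequently, the expected number of rejections in the rejection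
representation of the beta prime process `BPP(γ, α, d)` with proposal rate
measure `γ (Γ(α+1)/(Γ(1-d)Γ(α+d))) x^(-1-d) dx` equals `γα/d`. -/
theorem beta_prime_rejection_expected_rejections_power_law
    (α d : ℝ) (hα : 0 < α) (hd0 : 0 < d) (hd1 : d < 1) :
    (∫ x in Set.Ioi (0:ℝ), x ^ (-1 - d) * (1 - (1 + x) ^ (-α))
        = (α / d) * Real.Gamma (1 - d) * Real.Gamma (α + d) / Real.Gamma (α + 1)) ∧
    (∀ γ : ℝ, 0 < γ →
      γ * (Real.Gamma (α + 1) / (Real.Gamma (1 - d) * Real.Gamma (α + d))) *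
          ∫ x in Set.Ioi (0:ℝ), x ^ (-1 - d) * (1 - (1 + x) ^ (-α))
        = γ * α / d) := by
  have hG1 : 0 < Real.Gamma (1 - d) := Real.Gamma_pos_of_pos (by linarith)
  have hG2 : 0 < Real.Gamma (α + d) := Real.Gamma_pos_of_pos (by linarith)
  have hG3 : 0 < Real.Gamma (α + 1) := Real.Gamma_pos_of_pos (by linarith)
  have hI2 : ∫ x in Set.Ioi (0:ℝ), x ^ (-d) * (1+x) ^ (-α-1)
      = Real.Gamma (1 - d) * Real.Gamma (α + d) / Real.Gamma (α + 1) := by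
    rw [bppCov α d]
    have h := bppRealBeta (1-d) (α+d) (by linarith) (by linarith)
    rw [show (1-d)+(α+d) = α+1 from by ring,
      show (1-d)-(1:ℝ) = -d from by ring,
      show (α+d)-(1:ℝ) = α+d-1 from by ring] at h
    exact h
  have hsub := MeasureTheory.integral_sub (bppInt1 α d hα hd0 hd1)
    ((bppInt2 α d hα hd0 hd1).const_mul (α/d))
  rw [bppFTC α d hα hd0 hd1] at hsub
  rw [MeasureTheory.integral_const_mul, hI2] at hsub
  have hP1 : ∫ x in Set.Ioi (0:ℝ), x ^ (-1 - d) * (1 - (1 + x) ^ (-α))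
      = (α / d) * Real.Gamma (1 - d) * Real.Gamma (α + d) / Real.Gamma (α + 1) := by
    have : (∫ x in Set.Ioi (0:ℝ), x ^ (-1 - d) * (1 - (1 + x) ^ (-α)))
        = (α/d) * (Real.Gamma (1 - d) * Real.Gamma (α + d) / Real.Gamma (α + 1)) := by
      linarith [hsub]
    rw [this]; ring
  refine ⟨hP1, fun γ hγ => ?_⟩
  rw [hP1]
  have hd' : d ≠ 0 := hd0.ne'
  field_simp
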